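/- Suppose the nodes ξ_1,…,ξ_n are pairwise distinct and a_{i,l_i−1} ≠ 0 for all i, and set C₁ = ‖U(ξ_1,l_1+1,…,ξ_n,l_n+1)^{−1}‖_∞. Then for every ε > 0 and every vector v ∈ ℂ^R with |v_k| ≤ ε for all k, the component of J_P(x)^{−1} v corresponding to the parameter ξ_i satisfies |[J_P(x)^{−1} v]_{ξ_i}| ≤ C₁ ε / |a_{i,l_i−1}| for every i = 1,…,n. -/

import Mathlib

open scoped BigOperators

set_option maxHeartbeats 1000000
set_option linter.unnecessarySimpa false

noncomputable section

/-- Offset of the `i`-th block of columns: the sum of the multiplicities of all previous blocks. -/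
def blockOff {n : ℕ} (L : Fin n → ℕ) (i : Fin n) : ℕ := ∑ i' ∈ Finset.Iio i, L i'

theorem blockOff_add_lt {n : ℕ} (L : Fin n → ℕ) (i : Fin n) {j : ℕ} (hj : j < L i) :
    blockOff L i + j < ∑ i', L i' := by
  have h1 : ∑ i' ∈ insert i (Finset.Iio i), L i' = ∑ i' ∈ Finset.Iio i, L i' + L i := by
    rw [Finset.sum_insert (by simp)]; ring
  have h2 : ∑ i' ∈ insert i (Finset.Iio i), L i' ≤ ∑ i', L i' :=
    Finset.sum_le_sum_of_subset (Finset.subset_univ _)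
  unfold blockOff
  omega

/-- The flattened index of position `j` inside block `i`, when block `i` has size `L i`. -/
def encC {n : ℕ} (L : Fin n → ℕ) (i : Fin n) (j : Fin (L i)) : Fin (∑ i', L i') :=
  ⟨blockOff L i + j, blockOff_add_lt L i j.isLt⟩

/-- The (square) confluent Vandermonde matrix on nodes `ξ_i` with multiplicities `L i`:
rows are indexed by `k = 0,…,(∑ L i)−1`; the entry in row `k` and column `j` of block `i`
is `(k)_j ξ_i^{k−j}` (zero when `j > k`). -/
def confVand {n : ℕ} (L : Fin n → ℕ) (ξ : Fin n → ℂ) :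
    Matrix (Fin (∑ i, L i)) (Fin (∑ i, L i)) ℂ :=
  fun k c => ∑ i, ∑ j : Fin (L i),
    if c = encC L i j then ((k : ℕ).descFactorial j : ℂ) * ξ i ^ ((k : ℕ) - (j : ℕ)) else 0

/-- The index (in the parameter vector) of the magnitude `a_{i,j}` (`j < l i`) or,
for `j = l i`, of the node `ξ_i`; the parameters are ordered
`(a_{1,0},…,a_{1,l_1−1}, ξ_1, …, a_{n,0},…,a_{n,l_n−1}, ξ_n)`. -/
def encP {n : ℕ} (l : Fin n → ℕ) (i : Fin n) (j : Fin (l i + 1)) :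
    Fin (∑ i', (l i' + 1)) :=
  encC (fun i' => l i' + 1) i j

/-- The parameter vector `x = (a_{1,0},…,a_{1,l_1−1}, ξ_1, …, a_{n,0},…,a_{n,l_n−1}, ξ_n)`. -/
def pronyParam {n : ℕ} (l : Fin n → ℕ) (ξ : Fin n → ℂ)
    (a : (i : Fin n) → Fin (l i) → ℂ) : Fin (∑ i', (l i' + 1)) → ℂ :=
  fun p => ∑ i, ∑ j : Fin (l i + 1),
    if p = encP l i j then (if h : (j : ℕ) < l i then a i ⟨j, h⟩ else ξ i) else 0

/-- The Prony map `P : ℂ^R → ℂ^R` sending the parameter vector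
`x = (a_{1,0},…,a_{1,l_1−1}, ξ_1, …, a_{n,0},…,a_{n,l_n−1}, ξ_n)` to the moment vector
`(m_0,…,m_{R−1})`, `m_k = Σ_i Σ_{j<l_i} a_{i,j} (k)_j ξ_i^{k−j}`. -/
def pronyMap {n : ℕ} (l : Fin n → ℕ) (x : Fin (∑ i', (l i' + 1)) → ℂ) :
    Fin (∑ i', (l i' + 1)) → ℂ :=
  fun k => ∑ i, ∑ j : Fin (l i),
    x (encP l i (Fin.castSucc j)) * ((k : ℕ).descFactorial j : ℂ) *
      (x (encP l i (Fin.last (l i)))) ^ ((k : ℕ) - (j : ℕ))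

/-- The Jacobian matrix of the Prony map at `x`: the `(k,p)` entry is the partial
derivative of the `k`-th moment with respect to the `p`-th parameter. -/
def pronyJacobian {n : ℕ} (l : Fin n → ℕ) (x : Fin (∑ i', (l i' + 1)) → ℂ) :
    Matrix (Fin (∑ i', (l i' + 1))) (Fin (∑ i', (l i' + 1))) ℂ :=
  fun k p => deriv (fun t : ℂ => pronyMap l (Function.update x p t) k) (x p)


theorem blockOff_mono_add {n : ℕ} {L : Fin n → ℕ} {i i' : Fin n} (h : i < i') :
    blockOff L i + L i ≤ blockOff L i' := by
  have hsub : insert i (Finset.Iio i) ⊆ Finset.Iio i' := by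
    intro x hx
    simp only [Finset.mem_insert, Finset.mem_Iio] at *
    rcases hx with rfl | hx
    · exact h
    · exact lt_trans hx h
  have h2 := Finset.sum_le_sum_of_subset (f := L) hsub
  rw [Finset.sum_insert (by simp)] at h2
  unfold blockOff
  omega

theorem encC_inj {n : ℕ} {L : Fin n → ℕ} {i i' : Fin n} {j : Fin (L i)} {j' : Fin (L i')}
    (h : encC L i j = encC L i' j') : i = i' ∧ (j : ℕ) = (j' : ℕ) := by
  have hval : blockOff L i + (j : ℕ) = blockOff L i' + (j' : ℕ) := congrArg Fin.val h
  have hj := j.isLt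
  have hj' := j'.isLt
  rcases lt_trichotomy i i' with hlt | heq | hgt
  · have := blockOff_mono_add (L := L) hlt; omega
  · subst heq; exact ⟨rfl, by omega⟩
  · have := blockOff_mono_add (L := L) hgt; omega

theorem encC_surj {n : ℕ} (L : Fin n → ℕ) (p : Fin (∑ i', L i')) :
    ∃ i : Fin n, ∃ j : Fin (L i), p = encC L i j := by
  classical
  have hbij : Function.Bijective (fun x : Σ i : Fin n, Fin (L i) => encC L x.1 x.2) := by
    rw [Fintype.bijective_iff_injective_and_card]
    constructor
    · rintro ⟨i, j⟩ ⟨i', j'⟩ h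
      obtain ⟨h1, h2⟩ := encC_inj h
      subst h1
      exact Sigma.ext rfl (heq_of_eq (Fin.ext h2))
    · simp
  obtain ⟨⟨i, j⟩, hij⟩ := hbij.2 p
  exact ⟨i, j, hij.symm⟩

theorem sum_enc_collapse {n : ℕ} {L : Fin n → ℕ} (g : (i : Fin n) → Fin (L i) → ℂ)
    (i0 : Fin n) (j0 : Fin (L i0)) :
    ∑ i, ∑ j : Fin (L i), (if encC L i0 j0 = encC L i j then g i j else 0) = g i0 j0 := by
  rw [Finset.sum_eq_single i0]
  · rw [Finset.sum_eq_single j0]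
    · simp
    · intro j _ hj
      rw [if_neg]
      intro h
      exact hj (Fin.ext (encC_inj h).2).symm
    · simp
  · intro i _ hi
    apply Finset.sum_eq_zero
    intro j _
    rw [if_neg]
    intro h
    exact hi ((encC_inj h).1).symm
  · simp


/-- helper: collapse lemma specialized to one block -/
theorem sum_enc_collapse_block {n : ℕ} {L : Fin n → ℕ} (i0 : Fin n) (g : Fin (L i0) → ℂ)
    (j0 : Fin (L i0)) :
    ∑ j : Fin (L i0), (if encC L i0 j0 = encC L i0 j then g j else 0) = g j0 := by
  rw [Finset.sum_eq_single j0]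
  · simp
  · intro j _ hj
    rw [if_neg]
    intro h
    exact hj (Fin.ext (encC_inj h).2).symm
  · simp

theorem encC_eq_iff {n : ℕ} {L : Fin n → ℕ} {i : Fin n} {j j' : Fin (L i)} :
    encC L i j = encC L i j' ↔ j = j' := by
  constructor
  · intro h; exact Fin.ext (encC_inj h).2
  · rintro rfl; rfl

theorem pronyParam_encP {n : ℕ} (l : Fin n → ℕ) (ξ : Fin n → ℂ)
    (a : (i : Fin n) → Fin (l i) → ℂ) (i : Fin n) (j : Fin (l i + 1)) :
    pronyParam l ξ a (encP l i j) = if h : (j : ℕ) < l i then a i ⟨j, h⟩ else ξ i :=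
  sum_enc_collapse (L := fun i' => l i' + 1)
    (g := fun i j => if h : (j : ℕ) < l i then a i ⟨j, h⟩ else ξ i) i j

theorem confVand_encC {n : ℕ} (L : Fin n → ℕ) (ξ : Fin n → ℂ) (k : Fin (∑ i, L i))
    (i : Fin n) (j : Fin (L i)) :
    confVand L ξ k (encC L i j) =
      ((k : ℕ).descFactorial j : ℂ) * ξ i ^ ((k : ℕ) - (j : ℕ)) :=
  sum_enc_collapse _ i j

/-- entries of the node column of the triangular factor `B` -/
def fB {n : ℕ} (l : Fin n → ℕ) (a : (i : Fin n) → Fin (l i) → ℂ)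
    (i : Fin n) (j : Fin (l i + 1)) : ℂ :=
  if h : 1 ≤ (j : ℕ) then a i ⟨(j : ℕ) - 1, by have := j.isLt; omega⟩ else 0

/-- the block upper-triangular factor with `J_P = U * B` -/
def Bmat {n : ℕ} (l : Fin n → ℕ) (a : (i : Fin n) → Fin (l i) → ℂ) :
    Matrix (Fin (∑ i', (l i' + 1))) (Fin (∑ i', (l i' + 1))) ℂ :=
  fun p q => ∑ i, ∑ j : Fin (l i + 1),
    if q = encP l i j then
      (if (j : ℕ) < l i then (if p = q then 1 else 0)
       else ∑ j' : Fin (l i + 1), if p = encP l i j' then fB l a i j' else 0)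
    else 0

/-- the inverse of `Bmat` -/
def Bmat' {n : ℕ} (l : Fin n → ℕ) (a : (i : Fin n) → Fin (l i) → ℂ) :
    Matrix (Fin (∑ i', (l i' + 1))) (Fin (∑ i', (l i' + 1))) ℂ :=
  fun p q => ∑ i, ∑ j : Fin (l i + 1),
    if q = encP l i j then
      (if (j : ℕ) < l i then (if p = q then 1 else 0)
       else ∑ j' : Fin (l i + 1), if p = encP l i j' then
          (if (j' : ℕ) < l i then -(fB l a i j') * (fB l a i (Fin.last (l i)))⁻¹
           else (fB l a i (Fin.last (l i)))⁻¹)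
        else 0)
    else 0

theorem Bmat_col {n : ℕ} (l : Fin n → ℕ) (a : (i : Fin n) → Fin (l i) → ℂ)
    (p : Fin (∑ i', (l i' + 1))) (i0 : Fin n) (j0 : Fin (l i0 + 1)) :
    Bmat l a p (encP l i0 j0) =
      (if (j0 : ℕ) < l i0 then (if p = encP l i0 j0 then 1 else 0)
       else ∑ j' : Fin (l i0 + 1), if p = encP l i0 j' then fB l a i0 j' else 0) := by
  unfold Bmat encP
  exact sum_enc_collapse (L := fun i' => l i' + 1)
    (g := fun i j =>
      (if (j : ℕ) < l i then (if p = encP l i0 j0 then 1 else 0)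
       else ∑ j' : Fin (l i + 1), if p = encP l i j' then fB l a i j' else 0)) i0 j0

theorem Bmat'_col {n : ℕ} (l : Fin n → ℕ) (a : (i : Fin n) → Fin (l i) → ℂ)
    (p : Fin (∑ i', (l i' + 1))) (i0 : Fin n) (j0 : Fin (l i0 + 1)) :
    Bmat' l a p (encP l i0 j0) =
      (if (j0 : ℕ) < l i0 then (if p = encP l i0 j0 then 1 else 0)
       else ∑ j' : Fin (l i0 + 1), if p = encP l i0 j' then
          (if (j' : ℕ) < l i0 then -(fB l a i0 j') * (fB l a i0 (Fin.last (l i0)))⁻¹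
           else (fB l a i0 (Fin.last (l i0)))⁻¹)
        else 0) := by
  unfold Bmat' encP
  exact sum_enc_collapse (L := fun i' => l i' + 1)
    (g := fun i j =>
      (if (j : ℕ) < l i then (if p = encP l i0 j0 then 1 else 0)
       else ∑ j' : Fin (l i + 1), if p = encP l i j' then
          (if (j' : ℕ) < l i then -(fB l a i j') * (fB l a i (Fin.last (l i)))⁻¹
           else (fB l a i (Fin.last (l i)))⁻¹)
        else 0)) i0 j0

theorem sum_enc_collapse_cast {n : ℕ} {l : Fin n → ℕ} (g : (i : Fin n) → Fin (l i) → ℂ)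
    (i0 : Fin n) (j0 : Fin (l i0)) :
    ∑ i, ∑ j : Fin (l i),
      (if encP l i0 (Fin.castSucc j0) = encP l i (Fin.castSucc j) then g i j else 0)
      = g i0 j0 := by
  rw [Finset.sum_eq_single i0]
  · rw [Finset.sum_eq_single j0]
    · simp
    · intro j _ hj
      rw [if_neg]
      intro h
      have := (encC_inj h).2
      simp only [Fin.coe_castSucc] at this
      exact hj (Fin.ext this).symm
    · simp
  · intro i _ hi
    apply Finset.sum_eq_zero
    intro j _
    rw [if_neg]
    intro h
    exact hi ((encC_inj h).1).symm
  · simp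

theorem encP_last_ne {n : ℕ} {l : Fin n → ℕ} {i i0 : Fin n} {j0 : Fin (l i0 + 1)}
    (h0 : (j0 : ℕ) < l i0) : encP l i (Fin.last (l i)) ≠ encP l i0 j0 := by
  intro h
  obtain ⟨h1, h2⟩ := encC_inj h
  subst h1
  simp only [Fin.val_last] at h2
  omega

theorem encP_cast_ne_last {n : ℕ} {l : Fin n → ℕ} {i i0 : Fin n} {j : Fin (l i)} :
    encP l i (Fin.castSucc j) ≠ encP l i0 (Fin.last (l i0)) := by
  intro h
  obtain ⟨h1, h2⟩ := encC_inj h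
  subst h1
  simp only [Fin.coe_castSucc, Fin.val_last] at h2
  omega

theorem encP_last_eq_iff {n : ℕ} {l : Fin n → ℕ} {i i0 : Fin n} :
    encP l i (Fin.last (l i)) = encP l i0 (Fin.last (l i0)) ↔ i = i0 := by
  constructor
  · intro h; exact (encC_inj h).1
  · rintro rfl; rfl

/-- case A: derivative with respect to a magnitude parameter -/
theorem hasDerivAt_pronyMap_mag {n : ℕ} (l : Fin n → ℕ) (ξ : Fin n → ℂ)
    (a : (i : Fin n) → Fin (l i) → ℂ) (k : Fin (∑ i', (l i' + 1)))
    (i0 : Fin n) (j0 : Fin (l i0)) :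
    HasDerivAt
      (fun t => pronyMap l
        (Function.update (pronyParam l ξ a) (encP l i0 (Fin.castSucc j0)) t) k)
      (((k : ℕ).descFactorial j0 : ℂ) * ξ i0 ^ ((k : ℕ) - (j0 : ℕ)))
      (pronyParam l ξ a (encP l i0 (Fin.castSucc j0))) := by
  set x := pronyParam l ξ a with hx
  set p := encP l i0 (Fin.castSucc j0) with hp
  have hkey : ((k : ℕ).descFactorial j0 : ℂ) * ξ i0 ^ ((k : ℕ) - (j0 : ℕ))
      = ∑ i, ∑ j : Fin (l i),
          (if p = encP l i (Fin.castSucc j) then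
            ((k : ℕ).descFactorial j : ℂ) * ξ i ^ ((k : ℕ) - (j : ℕ)) else 0) := by
    rw [sum_enc_collapse_cast
      (g := fun i j => ((k : ℕ).descFactorial j : ℂ) * ξ i ^ ((k : ℕ) - (j : ℕ))) i0 j0]
  rw [hkey]
  unfold pronyMap
  apply HasDerivAt.fun_sum
  intro i _
  apply HasDerivAt.fun_sum
  intro j _
  simp only [Function.update_apply]
  have hne : encP l i (Fin.last (l i)) ≠ p := encP_last_ne (by simpa using j0.isLt)
  simp only [if_neg hne]
  by_cases h1 : encP l i (Fin.castSucc j) = p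
  · simp only [if_pos h1, if_pos h1.symm]
    obtain ⟨hi, hj⟩ := encC_inj h1
    subst hi
    have hxl : x (encP l i (Fin.last (l i))) = ξ i := by
      rw [hx, pronyParam_encP]
      simp
    rw [hxl]
    simp only [Fin.coe_castSucc] at hj
    rw [hj]
    have := (hasDerivAt_id (x p)).mul_const
      (((k : ℕ).descFactorial j0 : ℂ) * ξ i ^ ((k : ℕ) - (j0 : ℕ)))
    simpa [mul_assoc, Nat.cast_ofNat, hj] using this
  · have h1' : p ≠ encP l i (Fin.castSucc j) := fun h => h1 h.symm
    simp only [if_neg h1, if_neg h1']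
    exact hasDerivAt_const _ _

/-- case B: derivative with respect to a node parameter -/
theorem hasDerivAt_pronyMap_node {n : ℕ} (l : Fin n → ℕ) (ξ : Fin n → ℂ)
    (a : (i : Fin n) → Fin (l i) → ℂ) (k : Fin (∑ i', (l i' + 1))) (i0 : Fin n) :
    HasDerivAt
      (fun t => pronyMap l
        (Function.update (pronyParam l ξ a) (encP l i0 (Fin.last (l i0))) t) k)
      (∑ j : Fin (l i0), a i0 j * ((k : ℕ).descFactorial j : ℂ) *
        ((((k : ℕ) - (j : ℕ) : ℕ) : ℂ) * ξ i0 ^ ((k : ℕ) - (j : ℕ) - 1)))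
      (pronyParam l ξ a (encP l i0 (Fin.last (l i0)))) := by
  set x := pronyParam l ξ a with hx
  set p := encP l i0 (Fin.last (l i0)) with hp
  have hxp : x p = ξ i0 := by rw [hx, hp, pronyParam_encP]; simp
  have hkey : (∑ j : Fin (l i0), a i0 j * ((k : ℕ).descFactorial j : ℂ) *
        ((((k : ℕ) - (j : ℕ) : ℕ) : ℂ) * ξ i0 ^ ((k : ℕ) - (j : ℕ) - 1)))
      = ∑ i, ∑ j : Fin (l i),
          (if i = i0 then x (encP l i (Fin.castSucc j)) * ((k : ℕ).descFactorial j : ℂ) *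
            ((((k : ℕ) - (j : ℕ) : ℕ) : ℂ) * (x p) ^ ((k : ℕ) - (j : ℕ) - 1)) else 0) := by
    symm
    refine (Finset.sum_eq_single i0
      (fun i _ hi => Finset.sum_eq_zero fun j _ => if_neg hi) (by simp)).trans ?_
    apply Finset.sum_congr rfl
    intro j _
    rw [if_pos rfl, hxp]
    have hxa : x (encP l i0 (Fin.castSucc j)) = a i0 j := by
      rw [hx, pronyParam_encP]
      simp
    rw [hxa]
  rw [hkey]
  unfold pronyMap
  apply HasDerivAt.fun_sum
  intro i _
  apply HasDerivAt.fun_sum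
  intro j _
  simp only [Function.update_apply]
  have hne : encP l i (Fin.castSucc j) ≠ p := encP_cast_ne_last
  simp only [if_neg hne]
  by_cases h1 : i = i0
  · subst h1
    have h2 : encP l i (Fin.last (l i)) = p := rfl
    simp only [if_pos h2, if_pos rfl]
    have := (hasDerivAt_pow ((k : ℕ) - (j : ℕ)) (x p)).const_mul
      (x (encP l i (Fin.castSucc j)) * ((k : ℕ).descFactorial j : ℂ))
    simpa [mul_assoc] using this
  · have h2 : encP l i (Fin.last (l i)) ≠ p := fun h => h1 (encP_last_eq_iff.mp h)
    simp only [if_neg h2, if_neg h1]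
    exact hasDerivAt_const _ _


theorem pronyJacobian_factor {n : ℕ} (l : Fin n → ℕ) (ξ : Fin n → ℂ)
    (a : (i : Fin n) → Fin (l i) → ℂ) :
    pronyJacobian l (pronyParam l ξ a) = confVand (fun i' => l i' + 1) ξ * Bmat l a := by
  ext k p
  obtain ⟨i0, j0, rfl⟩ := encC_surj (fun i' => l i' + 1) p
  rw [Matrix.mul_apply]
  by_cases h0 : (j0 : ℕ) < l i0
  · -- magnitude column
    have hcast : Fin.castSucc (⟨(j0 : ℕ), h0⟩ : Fin (l i0)) = j0 := Fin.ext rfl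
    have hL : pronyJacobian l (pronyParam l ξ a) k (encC (fun i' => l i' + 1) i0 j0)
        = ((k : ℕ).descFactorial j0 : ℂ) * ξ i0 ^ ((k : ℕ) - (j0 : ℕ)) := by
      have h := hasDerivAt_pronyMap_mag l ξ a k i0 ⟨(j0 : ℕ), h0⟩
      rw [hcast] at h
      exact h.deriv
    rw [hL]
    have hR : ∀ c, confVand (fun i' => l i' + 1) ξ k c *
        Bmat l a c (encC (fun i' => l i' + 1) i0 j0)
        = if c = encC (fun i' => l i' + 1) i0 j0
          then confVand (fun i' => l i' + 1) ξ k c else 0 := by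
      intro c
      rw [show Bmat l a c (encC (fun i' => l i' + 1) i0 j0)
            = Bmat l a c (encP l i0 j0) from rfl, Bmat_col, if_pos h0]
      split <;> simp_all [encP]
    rw [Finset.sum_congr rfl fun c _ => hR c, Finset.sum_ite_eq']
    simp only [Finset.mem_univ, if_true]
    rw [show confVand (fun i' => l i' + 1) ξ k (encC (fun i' => l i' + 1) i0 j0)
          = _ from confVand_encC (fun i' => l i' + 1) ξ k i0 j0]
  · -- node column
    have hj0 : j0 = Fin.last (l i0) := Fin.ext (by have := j0.isLt; simp; omega)
    subst hj0
    have hL : pronyJacobian l (pronyParam l ξ a) k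
          (encC (fun i' => l i' + 1) i0 (Fin.last (l i0)))
        = ∑ j : Fin (l i0), a i0 j * ((k : ℕ).descFactorial j : ℂ) *
            ((((k : ℕ) - (j : ℕ) : ℕ) : ℂ) * ξ i0 ^ ((k : ℕ) - (j : ℕ) - 1)) :=
      (hasDerivAt_pronyMap_node l ξ a k i0).deriv
    rw [hL]
    have hR : ∀ c, confVand (fun i' => l i' + 1) ξ k c *
        Bmat l a c (encC (fun i' => l i' + 1) i0 (Fin.last (l i0)))
        = ∑ j' : Fin (l i0 + 1), (if c = encP l i0 j' then
            confVand (fun i' => l i' + 1) ξ k c * fB l a i0 j' else 0) := by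
      intro c
      rw [show Bmat l a c (encC (fun i' => l i' + 1) i0 (Fin.last (l i0)))
            = Bmat l a c (encP l i0 (Fin.last (l i0))) from rfl, Bmat_col,
        if_neg (by simp), Finset.mul_sum]
      apply Finset.sum_congr rfl
      intro j' _
      split <;> simp_all [encP]
    rw [Finset.sum_congr rfl fun c _ => hR c, Finset.sum_comm]
    have hcol : ∀ j' : Fin (l i0 + 1),
        (∑ c, if c = encP l i0 j' then
            confVand (fun i' => l i' + 1) ξ k c * fB l a i0 j' else 0)
        = ((k : ℕ).descFactorial j' : ℂ) * ξ i0 ^ ((k : ℕ) - (j' : ℕ)) * fB l a i0 j' := by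
      intro j'
      rw [Finset.sum_ite_eq']
      simp only [Finset.mem_univ, if_true]
      rw [show confVand (fun i' => l i' + 1) ξ k (encP l i0 j')
            = _ from confVand_encC (fun i' => l i' + 1) ξ k i0 j']
    rw [Finset.sum_congr rfl fun j' _ => hcol j', Fin.sum_univ_succ]
    have h00 : fB l a i0 0 = 0 := by simp [fB]
    rw [h00, mul_zero, zero_add]
    apply Finset.sum_congr rfl
    intro j _
    have hfB : fB l a i0 j.succ = a i0 j := by
      simp only [fB, Fin.val_succ]
      rw [dif_pos (by omega)]
      congr 1
    have hd : ((k : ℕ).descFactorial ((j : ℕ) + 1) : ℂ)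
        = (((k : ℕ) - (j : ℕ) : ℕ) : ℂ) * ((k : ℕ).descFactorial j : ℂ) := by
      rw [Nat.descFactorial_succ]; push_cast; ring
    rw [hfB]
    simp only [Fin.val_succ]
    rw [hd, show (k : ℕ) - ((j : ℕ) + 1) = (k : ℕ) - (j : ℕ) - 1 from (Nat.sub_sub _ _ _).symm]
    ring

theorem fB_last {n : ℕ} (l : Fin n → ℕ) (a : (i : Fin n) → Fin (l i) → ℂ)
    (i : Fin n) (hi : 1 ≤ l i) :
    fB l a i (Fin.last (l i)) = a i ⟨l i - 1, by omega⟩ := by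
  simp only [fB, Fin.val_last]
  rw [dif_pos hi]

theorem Bmat_mul_Bmat' {n : ℕ} (l : Fin n → ℕ) (hl : ∀ i, 1 ≤ l i)
    (a : (i : Fin n) → Fin (l i) → ℂ)
    (hhigh : ∀ i, a i ⟨l i - 1, Nat.sub_lt (hl i) Nat.one_pos⟩ ≠ 0) :
    Bmat l a * Bmat' l a = 1 := by
  ext k q
  obtain ⟨i0, j0, rfl⟩ := encC_surj (fun i' => l i' + 1) q
  rw [Matrix.mul_apply, Matrix.one_apply]
  by_cases h0 : (j0 : ℕ) < l i0
  · have hterm : ∀ p, Bmat l a k p * Bmat' l a p (encC (fun i' => l i' + 1) i0 j0)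
        = if p = encP l i0 j0 then Bmat l a k p else 0 := by
      intro p
      rw [show Bmat' l a p (encC (fun i' => l i' + 1) i0 j0)
            = Bmat' l a p (encP l i0 j0) from rfl, Bmat'_col, if_pos h0]
      split <;> simp
    rw [Finset.sum_congr rfl fun p _ => hterm p, Finset.sum_ite_eq']
    simp only [Finset.mem_univ, if_true]
    rw [show encC (fun i' => l i' + 1) i0 j0 = encP l i0 j0 from rfl, Bmat_col, if_pos h0]
  · have hj0 : j0 = Fin.last (l i0) := Fin.ext (by have := j0.isLt; simp; omega)
    subst hj0
    set α := fB l a i0 (Fin.last (l i0)) with hα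
    have hterm : ∀ p, Bmat l a k p * Bmat' l a p (encC (fun i' => l i' + 1) i0 (Fin.last (l i0)))
        = ∑ j' : Fin (l i0 + 1), (if p = encP l i0 j' then Bmat l a k p *
            (if (j' : ℕ) < l i0 then -(fB l a i0 j') * α⁻¹ else α⁻¹) else 0) := by
      intro p
      rw [show Bmat' l a p (encC (fun i' => l i' + 1) i0 (Fin.last (l i0)))
            = Bmat' l a p (encP l i0 (Fin.last (l i0))) from rfl, Bmat'_col,
        if_neg (by simp), Finset.mul_sum]
      apply Finset.sum_congr rfl
      intro j' _
      split <;> simp [hα]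
    rw [Finset.sum_congr rfl fun p _ => hterm p, Finset.sum_comm]
    have hcol : ∀ j' : Fin (l i0 + 1),
        (∑ p, if p = encP l i0 j' then Bmat l a k p *
            (if (j' : ℕ) < l i0 then -(fB l a i0 j') * α⁻¹ else α⁻¹) else 0)
        = Bmat l a k (encP l i0 j') *
            (if (j' : ℕ) < l i0 then -(fB l a i0 j') * α⁻¹ else α⁻¹) := by
      intro j'
      rw [Finset.sum_ite_eq']
      simp
    rw [Finset.sum_congr rfl fun j' _ => hcol j',
      Finset.sum_congr rfl fun j' _ => by rw [Bmat_col]]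
    rw [Fin.sum_univ_castSucc]
    simp only [Fin.coe_castSucc, Fin.is_lt, if_true, Fin.val_last, lt_irrefl, if_false]
    rw [Fin.sum_univ_castSucc (f := fun j' : Fin (l i0 + 1) =>
      if k = encP l i0 j' then fB l a i0 j' else 0)]
    have hαinv : α * α⁻¹ = 1 := by
      rw [mul_inv_cancel₀]
      rw [hα, fB_last l a i0 (hl i0)]
      exact hhigh i0
    have hcancel : ∀ j : Fin (l i0),
        (if k = encP l i0 (Fin.castSucc j) then 1 else 0) * (-(fB l a i0 (Fin.castSucc j)) * α⁻¹)
        + (if k = encP l i0 (Fin.castSucc j) then fB l a i0 (Fin.castSucc j) else 0) * α⁻¹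
        = 0 := by
      intro j
      split <;> ring
    rw [add_mul, ← add_assoc, Finset.sum_mul, ← Finset.sum_add_distrib,
      Finset.sum_congr rfl fun j _ => hcancel j, Finset.sum_const_zero, zero_add]
    show (if k = encP l i0 (Fin.last (l i0)) then fB l a i0 (Fin.last (l i0)) else 0) * α⁻¹
      = if k = encP l i0 (Fin.last (l i0)) then 1 else 0
    split
    · exact hαinv
    · ring

theorem Bmat'_row_last {n : ℕ} (l : Fin n → ℕ) (a : (i : Fin n) → Fin (l i) → ℂ)
    (i : Fin n) (q : Fin (∑ i', (l i' + 1))) :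
    Bmat' l a (encP l i (Fin.last (l i))) q =
      if q = encP l i (Fin.last (l i)) then (fB l a i (Fin.last (l i)))⁻¹ else 0 := by
  obtain ⟨i1, j1, rfl⟩ := encC_surj (fun i' => l i' + 1) q
  show Bmat' l a (encP l i (Fin.last (l i))) (encP l i1 j1)
      = if encP l i1 j1 = encP l i (Fin.last (l i))
        then (fB l a i (Fin.last (l i)))⁻¹ else 0
  rw [Bmat'_col]
  by_cases h1 : (j1 : ℕ) < l i1
  · rw [if_pos h1, if_neg (encP_last_ne h1), if_neg (fun h => encP_last_ne h1 h.symm)]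
  · have hj1 : j1 = Fin.last (l i1) := Fin.ext (by have := j1.isLt; simp; omega)
    subst hj1
    rw [if_neg (by simp)]
    by_cases hi : i1 = i
    · subst hi
      rw [if_pos rfl]
      rw [Finset.sum_eq_single (Fin.last (l i1))]
      · rw [if_pos rfl, if_neg (by simp)]
      · intro j' _ hj'
        rw [if_neg]
        intro h
        exact hj' (Fin.ext (encC_inj h).2).symm
      · simp
    · rw [if_neg (show ¬(encP l i1 (Fin.last (l i1)) = encP l i (Fin.last (l i))) from
        fun h => hi (encC_inj h).1)]
      apply Finset.sum_eq_zero
      intro j' _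
      rw [if_neg]
      intro h
      exact hi (encC_inj h).1.symm

/-- let `C₁ = ‖U(ξ_1,l_1+1,…,ξ_n,l_n+1)⁻¹‖_∞` (maximal row sum of absolute
values).  If the nodes are pairwise distinct and the highest magnitudes are nonzero, then
for every `ε > 0` and every `v` with `|v_k| ≤ ε`, the component of `J_P(x)⁻¹ v`
corresponding to the node `ξ_i` has absolute value at most `C₁ ε / |a_{i,l_i−1}|`. -/
theorem pronyJacobian_inv_node_component_bound
    (n : ℕ) (hn : 1 ≤ n) (l : Fin n → ℕ) (hl : ∀ i, 1 ≤ l i)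
    (ξ : Fin n → ℂ) (a : (i : Fin n) → Fin (l i) → ℂ)
    (hdist : ∀ i j : Fin n, i ≠ j → ξ i ≠ ξ j)
    (hhigh : ∀ i, a i ⟨l i - 1, by have := hl i; omega⟩ ≠ 0)
    (C₁ : ℝ)
    (hC₁ : C₁ = ⨆ r, ∑ c, ‖((confVand (fun i => l i + 1) ξ)⁻¹) r c‖)
    (ε : ℝ) (hε : 0 < ε) (v : Fin (∑ i', (l i' + 1)) → ℂ)
    (hv : ∀ k, ‖v k‖ ≤ ε) :
    ∀ i : Fin n,
      ‖Matrix.mulVec (pronyJacobian l (pronyParam l ξ a))⁻¹ v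
            (encP l i (Fin.last (l i)))‖ ≤
        C₁ * ε / ‖a i ⟨l i - 1, by have := hl i; omega⟩‖ := by
  intro i
  have hfact := pronyJacobian_factor l ξ a
  have hBB := Bmat_mul_Bmat' l hl a hhigh
  have hBinv : (Bmat l a)⁻¹ = Bmat' l a := Matrix.inv_eq_right_inv hBB
  rw [hfact, Matrix.mul_inv_rev, hBinv, ← Matrix.mulVec_mulVec]
  set U := confVand (fun i' => l i' + 1) ξ with hU
  set w := U⁻¹.mulVec v with hw
  set p' := encP l i (Fin.last (l i)) with hp'
  have hrow : (Bmat' l a).mulVec w p' = (a i ⟨l i - 1, by have := hl i; omega⟩)⁻¹ * w p' := by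
    show ∑ q, Bmat' l a p' q * w q = _
    rw [Finset.sum_congr rfl fun q _ => by rw [Bmat'_row_last l a i q]]
    rw [Finset.sum_congr rfl fun q _ => show
        (if q = p' then (fB l a i (Fin.last (l i)))⁻¹ else 0) * w q
        = if q = p' then (fB l a i (Fin.last (l i)))⁻¹ * w q else 0 from by split <;> simp]
    rw [Finset.sum_ite_eq']
    simp only [Finset.mem_univ, if_true]
    rw [fB_last l a i (hl i)]
  rw [hrow, norm_mul, norm_inv]
  have hsum : ∑ c, ‖U⁻¹ p' c‖ ≤ C₁ := by
    rw [hC₁]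
    exact le_ciSup (f := fun r => ∑ c, ‖U⁻¹ r c‖)
      (Set.Finite.bddAbove (Set.finite_range _)) p'
  have habs : ‖w p'‖ ≤ C₁ * ε := by
    rw [hw]
    show ‖∑ c, U⁻¹ p' c * v c‖ ≤ C₁ * ε
    calc ‖∑ c, U⁻¹ p' c * v c‖
        ≤ ∑ c, ‖U⁻¹ p' c * v c‖ :=
          norm_sum_le _ _
      _ ≤ ∑ c, ‖U⁻¹ p' c‖ * ε := by
          apply Finset.sum_le_sum
          intro c _
          rw [norm_mul]
          exact mul_le_mul_of_nonneg_left (hv c) (norm_nonneg _)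
      _ = (∑ c, ‖U⁻¹ p' c‖) * ε := by rw [Finset.sum_mul]
      _ ≤ C₁ * ε := mul_le_mul_of_nonneg_right hsum (le_of_lt hε)
  have hapos : 0 ≤ (‖a i ⟨l i - 1, by have := hl i; omega⟩‖)⁻¹ := by positivity
  calc (‖a i ⟨l i - 1, by have := hl i; omega⟩‖)⁻¹ * ‖w p'‖
      ≤ (‖a i ⟨l i - 1, by have := hl i; omega⟩‖)⁻¹ * (C₁ * ε) :=
        mul_le_mul_of_nonneg_left habs hapos
    _ = C₁ * ε / ‖a i ⟨l i - 1, by have := hl i; omega⟩‖ := by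
        rw [div_eq_mul_inv, mul_comm]
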